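/- Let M, N ≥ 1, let X = Matrix (Fin M) (Fin N) ℝ with the Frobenius inner product ⟨u, v⟩ = Σ_{i,j} u_{ij} v_{ij}, and let D : X → X × X be the forward finite difference operator: (Du)¹_{ij} = u_{i+1,j} − u_{ij} for i < M and (Du)¹_{ij} = 0 in the last row; (Du)²_{ij} = u_{i,j+1} − u_{ij} for j < N and (Du)²_{ij} = 0 in the last column. Let F : X → (−∞, +∞] be proper and convex and let α > 0. Suppose u* ∈ X and p* = (p*¹, p*²) ∈ X × X satisfy: (i) |p*¹_{ij}| ≤ 1 and |p*²_{ij}| ≤ 1 for all i, j; (ii) for every v ∈ X, α F(v) ≥ α F(u*) − ⟨p*, D(v − u*)⟩ (i.e., −D^* p*/α is a subgradient of F at u*); and (iii) ⟨Du*, p*⟩ = Σ_{i,j} (|(Du*)¹_{ij}| + |(Du*)²_{ij}|). Then u* minimizes J(u) = α F(u) + Σ_{i,j} (|(Du)¹_{ij}| + |(Du)²_{ij}|) over X. -/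

import Mathlib

open Finset

/-- Forward finite difference in the first (row) direction, zero in the last row. -/
noncomputable def fdiff1 {M N : ℕ} (u : Matrix (Fin M) (Fin N) ℝ) : Matrix (Fin M) (Fin N) ℝ :=
  fun i j => if h : (i : ℕ) + 1 < M then u ⟨(i : ℕ) + 1, h⟩ j - u i j else 0

/-- Forward finite difference in the second (column) direction, zero in the last column. -/
noncomputable def fdiff2 {M N : ℕ} (u : Matrix (Fin M) (Fin N) ℝ) : Matrix (Fin M) (Fin N) ℝ :=
  fun i j => if h : (j : ℕ) + 1 < N then u i ⟨(j : ℕ) + 1, h⟩ - u i j else 0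

/-- Anisotropic discrete total variation `‖|Du|‖₁ = Σ_{i,j} (|(Du)¹_{ij}| + |(Du)²_{ij}|)`. -/
noncomputable def anisoTV {M N : ℕ} (u : Matrix (Fin M) (Fin N) ℝ) : ℝ :=
  ∑ i, ∑ j, (|fdiff1 u i j| + |fdiff2 u i j|)


lemma fdiff1_sub' {M N : ℕ} (u v : Matrix (Fin M) (Fin N) ℝ) (i : Fin M) (j : Fin N) :
    fdiff1 (u - v) i j = fdiff1 u i j - fdiff1 v i j := by
  unfold fdiff1
  split_ifs <;> simp [Matrix.sub_apply] <;> ring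

lemma fdiff2_sub' {M N : ℕ} (u v : Matrix (Fin M) (Fin N) ℝ) (i : Fin M) (j : Fin N) :
    fdiff2 (u - v) i j = fdiff2 u i j - fdiff2 v i j := by
  unfold fdiff2
  split_ifs <;> simp [Matrix.sub_apply] <;> ring

/-- if `(u*, p*)` satisfies the primal-dual optimality relations for the
finite difference discretization, then `u*` minimizes `J(u) = αF(u) + ‖|Du|‖₁`. -/
theorem primal_dual_relation_gives_minimizer (M N : ℕ) (hM : 1 ≤ M) (hN : 1 ≤ N)
    (F : Matrix (Fin M) (Fin N) ℝ → EReal)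
    (hFbot : ∀ u, F u ≠ ⊥) (hFproper : ∃ u, F u ≠ ⊤)
    (hFconvex : ∀ u v : Matrix (Fin M) (Fin N) ℝ, ∀ t : ℝ, 0 ≤ t → t ≤ 1 →
      F (t • u + (1 - t) • v) ≤ (t : EReal) * F u + ((1 - t : ℝ) : EReal) * F v)
    (α : ℝ) (hα : 0 < α)
    (ustar p1 p2 : Matrix (Fin M) (Fin N) ℝ)
    (hp : ∀ i j, |p1 i j| ≤ 1 ∧ |p2 i j| ≤ 1)
    (hsubgrad : ∀ v : Matrix (Fin M) (Fin N) ℝ,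
      (α : EReal) * F v ≥ (α : EReal) * F ustar -
        ((∑ i, ∑ j, (p1 i j * fdiff1 (v - ustar) i j + p2 i j * fdiff2 (v - ustar) i j) : ℝ) : EReal))
    (halign : (∑ i, ∑ j, (fdiff1 ustar i j * p1 i j + fdiff2 ustar i j * p2 i j)) = anisoTV ustar) :
    ∀ v : Matrix (Fin M) (Fin N) ℝ,
      (α : EReal) * F ustar + ((anisoTV ustar : ℝ) : EReal) ≤
        (α : EReal) * F v + ((anisoTV v : ℝ) : EReal) := by
  classical
  -- inner product bound
  have hbound : ∀ w : Matrix (Fin M) (Fin N) ℝ,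
      (∑ i, ∑ j, (p1 i j * fdiff1 w i j + p2 i j * fdiff2 w i j)) ≤ anisoTV w := by
    intro w
    unfold anisoTV
    refine Finset.sum_le_sum fun i _ => Finset.sum_le_sum fun j _ => ?_
    have h1 : p1 i j * fdiff1 w i j ≤ |fdiff1 w i j| := by
      calc p1 i j * fdiff1 w i j ≤ |p1 i j * fdiff1 w i j| := le_abs_self _
        _ = |p1 i j| * |fdiff1 w i j| := abs_mul _ _
        _ ≤ 1 * |fdiff1 w i j| := by
            exact mul_le_mul_of_nonneg_right (hp i j).1 (abs_nonneg _)
        _ = |fdiff1 w i j| := one_mul _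
    have h2 : p2 i j * fdiff2 w i j ≤ |fdiff2 w i j| := by
      calc p2 i j * fdiff2 w i j ≤ |p2 i j * fdiff2 w i j| := le_abs_self _
        _ = |p2 i j| * |fdiff2 w i j| := abs_mul _ _
        _ ≤ 1 * |fdiff2 w i j| := by
            exact mul_le_mul_of_nonneg_right (hp i j).2 (abs_nonneg _)
        _ = |fdiff2 w i j| := one_mul _
    linarith
  -- decomposition of the subgradient pairing
  have hconv : ∀ w : Matrix (Fin M) (Fin N) ℝ,
      (∑ i, ∑ j, (p1 i j * fdiff1 (w - ustar) i j + p2 i j * fdiff2 (w - ustar) i j))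
        = (∑ i, ∑ j, (p1 i j * fdiff1 w i j + p2 i j * fdiff2 w i j)) - anisoTV ustar := by
    intro w
    rw [← halign, ← Finset.sum_sub_distrib]
    refine Finset.sum_congr rfl fun i _ => ?_
    rw [← Finset.sum_sub_distrib]
    refine Finset.sum_congr rfl fun j _ => ?_
    rw [fdiff1_sub', fdiff2_sub']
    ring
  -- F ustar is not ⊤
  have hus : F ustar ≠ ⊤ := by
    obtain ⟨w, hw⟩ := hFproper
    intro htop
    have h := hsubgrad w
    rw [htop, EReal.mul_top_of_pos (by exact_mod_cast hα), EReal.top_sub_coe] at h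
    have hFw : F w ≠ ⊤ := hw
    have := EReal.coe_toReal hFw (hFbot w)
    rw [← this, ← EReal.coe_mul, ge_iff_le, top_le_iff] at h
    exact EReal.coe_ne_top _ h
  set s := (F ustar).toReal with hs
  have hsF : F ustar = (s : EReal) := (EReal.coe_toReal hus (hFbot _)).symm
  intro v
  set A := (∑ i, ∑ j, (p1 i j * fdiff1 v i j + p2 i j * fdiff2 v i j)) with hA
  have hcv := hconv v
  have hsub := hsubgrad v
  rw [hsF, hcv, ← EReal.coe_mul, ← EReal.coe_sub] at hsub
  have hAle : A ≤ anisoTV v := hbound v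
  have key : α * s + anisoTV ustar ≤ (α * s - (A - anisoTV ustar)) + anisoTV v := by
    linarith
  calc (α : EReal) * F ustar + ((anisoTV ustar : ℝ) : EReal)
      = ((α * s + anisoTV ustar : ℝ) : EReal) := by
        rw [hsF, ← EReal.coe_mul, ← EReal.coe_add]
    _ ≤ ((α * s - (A - anisoTV ustar) + anisoTV v : ℝ) : EReal) := by
        exact_mod_cast key
    _ = ((α * s - (A - anisoTV ustar) : ℝ) : EReal) + ((anisoTV v : ℝ) : EReal) := by
        rw [← EReal.coe_add]
    _ ≤ (α : EReal) * F v + ((anisoTV v : ℝ) : EReal) := by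
        exact add_le_add_left hsub _
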